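/- Fix an integer r ≥ 0 and γ > 1. For the dynamic discrete uniform distribution with parameter γ, the quantity s²_{r,n} is asymptotically equivalent to n^{r+1−γr} (r+1) / r! as n → ∞, i.e., the ratio of the two sides tends to 1. In particular, if r ≥ 1 and γ = 1 + 1/r then s²_{r,n} → (r+1)/r!, if r ≥ 1 and γ > 1 + 1/r then s²_{r,n} → 0, and if γ < 1 + 1/r then s²_{r,n} → ∞. -/

import Mathlib

open MeasureTheory ProbabilityTheory Filter Topology
open scoped NNReal

noncomputable section

/-- pmf of the dynamic geometric distribution with parameter `a`:
`p_ℓ = (e^{1/a} - 1) e^{-ℓ/a}` for `ℓ = 1, 2, …` (letter `0` is not used). -/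
def geomPMF (a : ℝ) (ℓ : ℕ) : ℝ :=
  if ℓ = 0 then 0 else (Real.exp (1 / a) - 1) * Real.exp (-(ℓ : ℝ) / a)

/-- pmf of the fixed geometric distribution: `p_ℓ = p (1-p)^{ℓ-1}` for `ℓ = 1, 2, …`. -/
def fixedGeomPMF (p : ℝ) (ℓ : ℕ) : ℝ :=
  if ℓ = 0 then 0 else p * (1 - p) ^ (ℓ - 1)

/-- pmf of the dynamic discrete uniform distribution with parameter `γ` and sample size `n`:
`p_ℓ^{(n)} = 1/⌊n^γ⌋` for `ℓ = 1, …, ⌊n^γ⌋`. -/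
def unifPMF (γ : ℝ) (n : ℕ) (ℓ : ℕ) : ℝ :=
  if 1 ≤ ℓ ∧ ℓ ≤ ⌊(n : ℝ) ^ γ⌋₊ then (⌊(n : ℝ) ^ γ⌋₊ : ℝ)⁻¹ else 0

/-- pmf of the fixed discrete uniform distribution on `{1, …, K}`. -/
def fixedUnifPMF (K : ℕ) (ℓ : ℕ) : ℝ :=
  if 1 ≤ ℓ ∧ ℓ ≤ K then (K : ℝ)⁻¹ else 0

/-- `y_{ℓ,n}`: the number of times letter `ℓ` appears in the sample `ω`. -/
def occ {n : ℕ} (ω : Fin n → ℕ) (ℓ : ℕ) : ℕ :=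
  (Finset.univ.filter fun i => ω i = ℓ).card

/-- `N_{r,n}`: the number of letters appearing exactly `r` times in `ω` (valid for `r ≥ 1`). -/
def Ncount {n : ℕ} (ω : Fin n → ℕ) (r : ℕ) : ℕ :=
  ((Finset.univ.image ω).filter fun ℓ => occ ω ℓ = r).card

/-- `π_{r,n}`: the `r`-th occupancy probability. -/
def occProb {n : ℕ} (p : ℕ → ℝ) (ω : Fin n → ℕ) (r : ℕ) : ℝ :=
  ∑' ℓ : ℕ, p ℓ * (if occ ω ℓ = r then 1 else 0)

/-- `T_{r,n}`: Turing's estimator. -/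
def turing {n : ℕ} (ω : Fin n → ℕ) (r : ℕ) : ℝ :=
  ((r : ℝ) + 1) * (Ncount ω (r + 1) : ℝ) / (n : ℝ)

/-- `ŝ_{r,n} = sqrt((r+1)² N_{r+1,n} + (r+2)(r+1) N_{r+2,n})`. -/
def shat {n : ℕ} (ω : Fin n → ℕ) (r : ℕ) : ℝ :=
  Real.sqrt (((r : ℝ) + 1) ^ 2 * (Ncount ω (r + 1) : ℝ) +
    ((r : ℝ) + 2) * ((r : ℝ) + 1) * (Ncount ω (r + 2) : ℝ))

/-- the joint pmf of an i.i.d. sample of size `n` from the pmf `p`. -/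
def jointPMF {n : ℕ} (p : ℕ → ℝ) (ω : Fin n → ℕ) : ℝ := ∏ i, p (ω i)

/-- the normalized statistic `(n/ŝ_{r,n})(T_{r,n} - π_{r,n})`, interpreted as `0`
when `ŝ_{r,n} = 0` (which is automatic from Lean's convention `x / 0 = 0`). -/
def normStat {n : ℕ} (p : ℕ → ℝ) (ω : Fin n → ℕ) (r : ℕ) : ℝ :=
  (n : ℝ) / shat ω r * (turing ω r - occProb p ω r)

open scoped Classical in
/-- the statistic `T_{r,n} (n/ŝ_{r,n}) (T_{r,n}/π_{r,n} - 1)`, interpreted as `0` on the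
event where `ŝ_{r,n} = 0` or `π_{r,n} = 0`. -/
def ratioStat {n : ℕ} (p : ℕ → ℝ) (ω : Fin n → ℕ) (r : ℕ) : ℝ :=
  if shat ω r = 0 ∨ occProb p ω r = 0 then 0
  else turing ω r * ((n : ℝ) / shat ω r) * (turing ω r / occProb p ω r - 1)

/-- `s²_{r,n} = Σ_ℓ (r+1+n p_ℓ) e^{-n p_ℓ} (n p_ℓ)^{r+1} / r!`. -/
def s2 (p : ℕ → ℝ) (r n : ℕ) : ℝ :=
  ∑' ℓ : ℕ, ((r : ℝ) + 1 + (n : ℝ) * p ℓ) * Real.exp (-((n : ℝ) * p ℓ)) *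
    ((n : ℝ) * p ℓ) ^ (r + 1) / (r.factorial : ℝ)

/-- `h_{n,η}(x) = e^{-n f_n(x)} (n f_n(x))^η` where `f_n(x) = (e^{1/a_n} - 1) e^{-x/a_n}`. -/
def hfun (a : ℝ) (n : ℕ) (η : ℝ) (x : ℝ) : ℝ :=
  Real.exp (-((n : ℝ) * ((Real.exp (1 / a) - 1) * Real.exp (-x / a)))) *
    ((n : ℝ) * ((Real.exp (1 / a) - 1) * Real.exp (-x / a))) ^ η

lemma s2_unif (γ : ℝ) (r n : ℕ) :
    s2 (unifPMF γ n) r n =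
      (⌊(n : ℝ) ^ γ⌋₊ : ℝ) * (((r : ℝ) + 1 + (n : ℝ) * (⌊(n : ℝ) ^ γ⌋₊ : ℝ)⁻¹) *
        Real.exp (-((n : ℝ) * (⌊(n : ℝ) ^ γ⌋₊ : ℝ)⁻¹)) *
        ((n : ℝ) * (⌊(n : ℝ) ^ γ⌋₊ : ℝ)⁻¹) ^ (r + 1) / (r.factorial : ℝ)) := by
  set K := ⌊(n : ℝ) ^ γ⌋₊ with hK
  rw [s2, tsum_eq_sum (s := Finset.Icc 1 K) ?_]
  · rw [Finset.sum_congr rfl (g := fun _ => ((r : ℝ) + 1 + (n : ℝ) * (K : ℝ)⁻¹) *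
        Real.exp (-((n : ℝ) * (K : ℝ)⁻¹)) * ((n : ℝ) * (K : ℝ)⁻¹) ^ (r + 1) / (r.factorial : ℝ))]
    · rw [Finset.sum_const, Nat.card_Icc]
      simp [nsmul_eq_mul]
    · intro ℓ hℓ
      simp only [Finset.mem_Icc] at hℓ
      rw [unifPMF, if_pos hℓ]
  · intro ℓ hℓ
    simp only [Finset.mem_Icc, not_and_or, not_le] at hℓ
    have : unifPMF γ n ℓ = 0 := by rw [unifPMF, if_neg]; omega
    simp [this]

/-- for the dynamic discrete uniform distribution with parameter `γ > 1` and
fixed `r ≥ 0`, `s²_{r,n} ∼ n^{r+1-γr} (r+1)/r!`.  In particular, if `r ≥ 1` and `γ = 1 + 1/r`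
then `s²_{r,n} → (r+1)/r!`; if `r ≥ 1` and `γ > 1 + 1/r` then `s²_{r,n} → 0`; and if
`γ < 1 + 1/r` (i.e. `rγ < r + 1`, with `1/0 = ∞` for `r = 0`) then `s²_{r,n} → ∞`. -/
theorem s2_asymptotic_dynamic_uniform_gamma_gt_one (r : ℕ) (γ : ℝ) (hγ : 1 < γ) :
    Tendsto
      (fun n : ℕ => s2 (unifPMF γ n) r n /
        ((n : ℝ) ^ ((r : ℝ) + 1 - γ * (r : ℝ)) * ((r : ℝ) + 1) / (r.factorial : ℝ)))
      atTop (𝓝 1) ∧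
    (1 ≤ r → γ = 1 + 1 / (r : ℝ) →
      Tendsto (fun n : ℕ => s2 (unifPMF γ n) r n) atTop
        (𝓝 (((r : ℝ) + 1) / (r.factorial : ℝ)))) ∧
    (1 ≤ r → 1 + 1 / (r : ℝ) < γ →
      Tendsto (fun n : ℕ => s2 (unifPMF γ n) r n) atTop (𝓝 0)) ∧
    ((r : ℝ) * γ < (r : ℝ) + 1 →
      Tendsto (fun n : ℕ => s2 (unifPMF γ n) r n) atTop atTop) := by
  have hγ0 : 0 < γ := by linarith
  have hfac : (0:ℝ) < (r.factorial : ℝ) := by exact_mod_cast r.factorial_pos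
  have hr1 : (0:ℝ) < (r:ℝ) + 1 := by positivity
  -- floor tendsto atTop
  have hK : Tendsto (fun n : ℕ => ⌊(n : ℝ) ^ γ⌋₊) atTop atTop :=
    Tendsto.comp tendsto_nat_floor_atTop
      ((tendsto_rpow_atTop hγ0).comp tendsto_natCast_atTop_atTop)
  have hKR : Tendsto (fun n : ℕ => (⌊(n : ℝ) ^ γ⌋₊ : ℝ)) atTop atTop :=
    tendsto_natCast_atTop_atTop.comp hK
  -- n^γ / K → 1
  have hC : Tendsto (fun n : ℕ => (n : ℝ) ^ γ / (⌊(n : ℝ) ^ γ⌋₊ : ℝ)) atTop (𝓝 1) := by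
    have hub : Tendsto (fun n : ℕ => 1 + (⌊(n : ℝ) ^ γ⌋₊ : ℝ)⁻¹) atTop (𝓝 1) := by
      simpa using tendsto_const_nhds.add hKR.inv_tendsto_atTop
    apply tendsto_of_tendsto_of_tendsto_of_le_of_le' tendsto_const_nhds hub
    · filter_upwards [hK.eventually_ge_atTop 1] with n hn
      have hKpos : (0 : ℝ) < (⌊(n : ℝ) ^ γ⌋₊ : ℝ) := by exact_mod_cast hn
      rw [le_div_iff₀ hKpos, one_mul]
      exact Nat.floor_le (by positivity)
    · filter_upwards [hK.eventually_ge_atTop 1] with n hn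
      have hKpos : (0 : ℝ) < (⌊(n : ℝ) ^ γ⌋₊ : ℝ) := by exact_mod_cast hn
      rw [div_le_iff₀ hKpos, add_mul, one_mul, inv_mul_cancel₀ hKpos.ne']
      exact (Nat.lt_floor_add_one _).le
  -- t := n/K → 0
  have ht : Tendsto (fun n : ℕ => (n : ℝ) * (⌊(n : ℝ) ^ γ⌋₊ : ℝ)⁻¹) atTop (𝓝 0) := by
    have h1 : Tendsto (fun n : ℕ => (n : ℝ) ^ (1 - γ)) atTop (𝓝 0) := by
      have := (tendsto_rpow_neg_atTop (by linarith : (0:ℝ) < γ - 1)).comp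
        tendsto_natCast_atTop_atTop
      simpa [neg_sub, Function.comp_def] using this
    have := h1.mul hC
    rw [mul_one] at this
    apply this.congr'
    filter_upwards [eventually_ge_atTop 1, hK.eventually_ge_atTop 1] with n hn hKn
    have hN : (0:ℝ) < (n:ℝ) := by exact_mod_cast hn
    have hKpos : (0 : ℝ) < (⌊(n : ℝ) ^ γ⌋₊ : ℝ) := by exact_mod_cast hKn
    have hA : (0:ℝ) < (n:ℝ) ^ γ := Real.rpow_pos_of_pos hN γ
    rw [Real.rpow_sub hN, Real.rpow_one]
    field_simp
  -- the ratio function g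
  have hg : Tendsto (fun n : ℕ =>
      ((n : ℝ) ^ γ / (⌊(n : ℝ) ^ γ⌋₊ : ℝ)) ^ r *
        (((r : ℝ) + 1 + (n : ℝ) * (⌊(n : ℝ) ^ γ⌋₊ : ℝ)⁻¹) / ((r : ℝ) + 1)) *
        Real.exp (-((n : ℝ) * (⌊(n : ℝ) ^ γ⌋₊ : ℝ)⁻¹))) atTop (𝓝 1) := by
    have h1 : Tendsto (fun n : ℕ => (((r : ℝ) + 1 + (n : ℝ) * (⌊(n : ℝ) ^ γ⌋₊ : ℝ)⁻¹) /
        ((r : ℝ) + 1))) atTop (𝓝 1) := by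
      have := (tendsto_const_nhds (x := (r:ℝ)+1) (f := atTop (α := ℕ))).add ht
      rw [add_zero] at this
      simpa [div_self hr1.ne'] using this.div_const ((r:ℝ)+1)
    have h2 : Tendsto (fun n : ℕ => Real.exp (-((n : ℝ) * (⌊(n : ℝ) ^ γ⌋₊ : ℝ)⁻¹)))
        atTop (𝓝 1) := by
      have := (Real.continuous_exp.tendsto 0).comp (neg_zero (G := ℝ) ▸ ht.neg)
      simpa [Function.comp_def] using this
    have := ((hC.pow r).mul h1).mul h2
    simpa using this
  -- main: ratio → 1
  have hmain : Tendsto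
      (fun n : ℕ => s2 (unifPMF γ n) r n /
        ((n : ℝ) ^ ((r : ℝ) + 1 - γ * (r : ℝ)) * ((r : ℝ) + 1) / (r.factorial : ℝ)))
      atTop (𝓝 1) := by
    apply hg.congr'
    filter_upwards [eventually_ge_atTop 1, hK.eventually_ge_atTop 1] with n hn hKn
    have hN : (0:ℝ) < (n:ℝ) := by exact_mod_cast hn
    have hKpos : (0 : ℝ) < (⌊(n : ℝ) ^ γ⌋₊ : ℝ) := by exact_mod_cast hKn
    rw [s2_unif]
    set K : ℝ := (⌊(n : ℝ) ^ γ⌋₊ : ℝ)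
    have hA : (0:ℝ) < (n:ℝ) ^ γ := Real.rpow_pos_of_pos hN γ
    have h1 : (n:ℝ) ^ ((r : ℝ) + 1 - γ * (r:ℝ)) = (n:ℝ) ^ (r+1) / ((n:ℝ)^γ) ^ r := by
      rw [Real.rpow_sub hN, Real.rpow_mul hN.le, Real.rpow_natCast,
        ← Real.rpow_natCast (n:ℝ) (r+1)]
      push_cast; ring_nf
    rw [h1]
    field_simp
    linear_combination (-(((n:ℝ)^γ)^r * K⁻¹^r * n * n^r)) * (mul_inv_cancel₀ hKpos.ne' : K * K⁻¹ = 1)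
  -- eventual positivity of target and the product decomposition
  have hdecomp : ∀ᶠ n : ℕ in atTop, s2 (unifPMF γ n) r n =
      (s2 (unifPMF γ n) r n /
        ((n : ℝ) ^ ((r : ℝ) + 1 - γ * (r : ℝ)) * ((r : ℝ) + 1) / (r.factorial : ℝ))) *
      ((n : ℝ) ^ ((r : ℝ) + 1 - γ * (r : ℝ)) * ((r : ℝ) + 1) / (r.factorial : ℝ)) := by
    filter_upwards [eventually_ge_atTop 1] with n hn
    have hN : (0:ℝ) < (n:ℝ) := by exact_mod_cast hn
    have : (0:ℝ) < (n : ℝ) ^ ((r : ℝ) + 1 - γ * (r : ℝ)) * ((r : ℝ) + 1) / (r.factorial : ℝ) := by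
      have := Real.rpow_pos_of_pos hN ((r : ℝ) + 1 - γ * (r : ℝ))
      positivity
    rw [div_mul_cancel₀ _ this.ne']
  refine ⟨hmain, ?_, ?_, ?_⟩
  · intro hr hγeq
    have hrR : (0:ℝ) < (r:ℝ) := by exact_mod_cast hr
    have he : (r : ℝ) + 1 - γ * (r : ℝ) = 0 := by
      rw [hγeq]; field_simp; ring
    have h2 : Tendsto (fun n : ℕ => (s2 (unifPMF γ n) r n /
        ((n : ℝ) ^ ((r : ℝ) + 1 - γ * (r : ℝ)) * ((r : ℝ) + 1) / (r.factorial : ℝ))) *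
        (((r : ℝ) + 1) / (r.factorial : ℝ))) atTop
        (𝓝 (1 * (((r : ℝ) + 1) / (r.factorial : ℝ)))) := hmain.mul tendsto_const_nhds
    rw [one_mul] at h2
    apply h2.congr'
    filter_upwards [hdecomp] with n hd
    conv_rhs => rw [hd]
    congr 1
    rw [he, Real.rpow_zero, one_mul]
  · intro hr hγgt
    have hrR : (0:ℝ) < (r:ℝ) := by exact_mod_cast hr
    have he : (r : ℝ) + 1 - γ * (r : ℝ) < 0 := by
      have : (r:ℝ) + 1 < γ * r := by
        have := mul_lt_mul_of_pos_right hγgt hrR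
        calc (r:ℝ) + 1 = (1 + 1/(r:ℝ)) * r := by field_simp
        _ < γ * r := this
      linarith
    have htarget : Tendsto (fun n : ℕ =>
        (n : ℝ) ^ ((r : ℝ) + 1 - γ * (r : ℝ)) * ((r : ℝ) + 1) / (r.factorial : ℝ))
        atTop (𝓝 0) := by
      have h0 : Tendsto (fun n : ℕ => (n : ℝ) ^ ((r : ℝ) + 1 - γ * (r : ℝ))) atTop (𝓝 0) := by
        have := (tendsto_rpow_neg_atTop (by linarith : (0:ℝ) < -((r : ℝ) + 1 - γ * (r : ℝ)))).comp
          tendsto_natCast_atTop_atTop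
        simpa [Function.comp_def] using this
      simpa using (h0.mul_const ((r:ℝ)+1)).div_const (r.factorial : ℝ)
    have := hmain.mul htarget
    rw [one_mul] at this
    exact this.congr' (hdecomp.mono fun n hd => hd.symm)
  · intro hlt
    have he : (0:ℝ) < (r : ℝ) + 1 - γ * (r : ℝ) := by
      have : (r:ℝ) * γ = γ * r := mul_comm _ _
      linarith
    have htarget : Tendsto (fun n : ℕ =>
        (n : ℝ) ^ ((r : ℝ) + 1 - γ * (r : ℝ)) * ((r : ℝ) + 1) / (r.factorial : ℝ))
        atTop atTop := by
      have h0 : Tendsto (fun n : ℕ => (n : ℝ) ^ ((r : ℝ) + 1 - γ * (r : ℝ))) atTop atTop :=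
        (tendsto_rpow_atTop he).comp tendsto_natCast_atTop_atTop
      exact (h0.atTop_mul_const hr1).atTop_div_const hfac
    exact ((hmain.pos_mul_atTop one_pos htarget).congr' (hdecomp.mono fun n hd => hd.symm))
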